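/- Let d ≥ 1 and let α : ℝ^d × ℝ^d → ℝ^d be continuous and satisfy the cocycle identity α(x, v+w) = α(x,v) + α(x+v, w). Suppose there exist λ ≥ 1 and C ≥ 0 with λ⁻¹‖v‖ − C ≤ ‖α(x,v)‖ ≤ λ‖v‖ + C for all x, v ∈ ℝ^d. Let A : ℝ^d → ℝ^d be an ℝ-linear map such that for every ε > 0 there exists r > 0 with ‖r^{−d} ∫_{C_r} α(x+s, v) ds − A(v)‖ ≤ ε·max(‖v‖, 1) for all x, v ∈ ℝ^d. Then A is bijective. -/

import Mathlib

open MeasureTheory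

/-- `Euc d` is `d`-dimensional Euclidean space. -/
abbrev Euc (d : ℕ) := EuclideanSpace ℝ (Fin d)

/-- The cube `[-r/2, r/2]^d` in `ℝ^d`. -/
def cube (d : ℕ) (r : ℝ) : Set (Euc d) :=
  {s | ∀ i, s i ∈ Set.Icc (-(r / 2)) (r / 2)}

lemma cube_eq (d : ℕ) (r : ℝ) :
    cube d r = (MeasurableEquiv.toLp 2 (Fin d → ℝ)).symm ⁻¹'
      (Set.pi Set.univ fun _ => Set.Icc (-(r / 2)) (r / 2)) := by
  ext s
  exact ⟨fun h i _ => h i, fun h i => h i trivial⟩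
lemma volume_cube (d : ℕ) {r : ℝ} (hr : 0 ≤ r) :
    volume (cube d r) = ENNReal.ofReal r ^ d := by
  rw [cube_eq, (EuclideanSpace.volume_preserving_symm_measurableEquiv_toLp (Fin d)).measure_preimage
      (by measurability), volume_pi_pi]
  simp [Real.volume_Icc]
lemma norm_le_of_mem_cube {d : ℕ} {r : ℝ} (hr : 0 ≤ r) {s : Euc d} (hs : s ∈ cube d r) :
    ‖s‖ ≤ Real.sqrt d * (r / 2) := by
  rw [EuclideanSpace.norm_eq]
  have h1 : ∀ i : Fin d, ‖s i‖ ^ 2 ≤ (r/2)^2 := by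
    intro i
    have := hs i
    rw [Real.norm_eq_abs, sq_abs]
    nlinarith [this.1, this.2]
  calc Real.sqrt (∑ i, ‖s i‖ ^ 2) ≤ Real.sqrt (∑ _i : Fin d, (r/2)^2) :=
        Real.sqrt_le_sqrt (Finset.sum_le_sum fun i _ => h1 i)
    _ = Real.sqrt d * (r/2) := by
        rw [Finset.sum_const, Finset.card_fin, nsmul_eq_mul,
          Real.sqrt_mul (Nat.cast_nonneg d), Real.sqrt_sq (by positivity)]
lemma isCompact_cube (d : ℕ) {r : ℝ} (hr : 0 ≤ r) : IsCompact (cube d r) := by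
  apply Metric.isCompact_of_isClosed_isBounded
  · have : cube d r = ⋂ i, (fun s : Euc d => s i) ⁻¹' Set.Icc (-(r/2)) (r/2) := by
      ext s; simp [cube]
    rw [this]
    exact isClosed_iInter fun i => (isClosed_Icc).preimage (EuclideanSpace.proj i).continuous
  · apply Metric.isBounded_iff_subset_closedBall (0 : Euc d) |>.2
    exact ⟨Real.sqrt d * (r/2), fun s hs => by simpa using norm_le_of_mem_cube hr hs⟩


/-- If a continuous cocycle on `ℝ^d` is bi-Lipschitz at large scale and its cube averages
converge uniformly to a linear map `A`, then `A` is bijective. -/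
theorem limit_of_cube_averages_bijective
    (d : ℕ) (hd : 1 ≤ d)
    (α : Euc d → Euc d → Euc d)
    (hαcont : Continuous fun p : Euc d × Euc d => α p.1 p.2)
    (hcoc : ∀ x v w : Euc d, α x (v + w) = α x v + α (x + v) w)
    (lam C : ℝ) (hlam : 1 ≤ lam) (hC : 0 ≤ C)
    (hlow : ∀ x v : Euc d, lam⁻¹ * ‖v‖ - C ≤ ‖α x v‖)
    (hup : ∀ x v : Euc d, ‖α x v‖ ≤ lam * ‖v‖ + C)
    (A : Euc d →ₗ[ℝ] Euc d)
    (hA : ∀ ε : ℝ, 0 < ε → ∃ r : ℝ, 0 < r ∧ ∀ x v : Euc d,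
      ‖(r ^ d)⁻¹ • (∫ s in cube d r, α (x + s) v) - A v‖ ≤ ε * max ‖v‖ 1) :
    Function.Bijective A := by
  have hlam0 : (0:ℝ) < lam := lt_of_lt_of_le one_pos hlam
  have hinj : Function.Injective A := by
    rw [← LinearMap.ker_eq_bot, LinearMap.ker_eq_bot']
    intro v hAv
    by_contra hv
    have hvn : 0 < ‖v‖ := norm_pos_iff.2 hv
    have hmax1 : (1:ℝ) ≤ max ‖v‖ 1 := le_max_right _ _
    have hmax0 : (0:ℝ) < max ‖v‖ 1 := lt_of_lt_of_le one_pos hmax1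
    set ε : ℝ := ‖v‖ / (2 * lam * max ‖v‖ 1) with hε_def
    have hε : 0 < ε := by positivity
    obtain ⟨r, hr, hest⟩ := hA ε hε
    have hr0 : (0:ℝ) ≤ r := hr.le
    set M : ℝ := lam * (Real.sqrt d * (r/2)) + C with hM_def
    have hM0 : 0 ≤ M := by positivity
    have hvolR : (volume (cube d r)).toReal = r ^ d := by
      rw [volume_cube d hr0, ENNReal.toReal_pow, ENNReal.toReal_ofReal hr0]
    have hrd : (0:ℝ) < r ^ d := pow_pos hr d
    have hcomp := isCompact_cube d hr0
    -- bound on the value of α on the cube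
    have hbd : ∀ x : Euc d, ∀ s ∈ cube d r, ‖α x s‖ ≤ M := by
      intro x s hs
      calc ‖α x s‖ ≤ lam * ‖s‖ + C := hup x s
        _ ≤ lam * (Real.sqrt d * (r/2)) + C := by
            have := norm_le_of_mem_cube hr0 hs
            nlinarith
        _ = M := rfl
    -- key estimate
    have key : ∀ w : Euc d, A w = 0 → lam⁻¹ * ‖w‖ - C ≤ ε * max ‖w‖ 1 + 2 * M := by
      intro w hw
      have hcont1 : Continuous fun s : Euc d => α s w :=
        hαcont.comp (continuous_id.prodMk continuous_const)
      have hcont2 : Continuous fun s : Euc d => α w s - α 0 s := by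
        apply Continuous.sub
        · exact hαcont.comp (continuous_const.prodMk continuous_id)
        · exact hαcont.comp (continuous_const.prodMk continuous_id)
      have hdec : ∀ s : Euc d, α s w = α 0 w + (α w s - α 0 s) := by
        intro s
        have h1 := hcoc 0 s w
        have h2 := hcoc 0 w s
        rw [zero_add] at h1 h2
        rw [add_comm s w] at h1
        rw [h1] at h2
        abel_nf
        linear_combination (norm := module) h2
      have hint2 : IntegrableOn (fun s : Euc d => α w s - α 0 s) (cube d r) volume :=
        hcont2.continuousOn.integrableOn_compact hcomp
      have hsplit : ∫ s in cube d r, α s w =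
          (r ^ d) • α 0 w + ∫ s in cube d r, (α w s - α 0 s) := by
        calc ∫ s in cube d r, α s w
            = ∫ s in cube d r, (α 0 w + (α w s - α 0 s)) := by
              congr 1; funext s; exact hdec s
          _ = (∫ _s in cube d r, α 0 w) + ∫ s in cube d r, (α w s - α 0 s) :=
              integral_add (integrableOn_const
                ((hcomp.measure_lt_top : volume (cube d r) < ⊤)).ne) hint2
          _ = (r ^ d) • α 0 w + ∫ s in cube d r, (α w s - α 0 s) := by
              rw [setIntegral_const, measureReal_def, hvolR]
      have herr : ‖∫ s in cube d r, (α w s - α 0 s)‖ ≤ 2 * M * (r ^ d) := by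
        have := norm_setIntegral_le_of_norm_le_const (C := 2 * M)
          (hcomp.measure_lt_top : volume (cube d r) < ⊤)
          (f := fun s : Euc d => α w s - α 0 s)
          (fun s hs => by
            calc ‖α w s - α 0 s‖ ≤ ‖α w s‖ + ‖α 0 s‖ := norm_sub_le _ _
              _ ≤ 2 * M := by linarith [hbd w s hs, hbd 0 s hs])
        rw [measureReal_def, hvolR] at this
        exact this
      have h1 := hest 0 w
      rw [hw, sub_zero] at h1
      simp only [zero_add] at h1
      have h2 : ‖(r ^ d : ℝ)⁻¹ • (∫ s in cube d r, α s w) - α 0 w‖ ≤ 2 * M := by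
        rw [hsplit, smul_add, smul_smul, inv_mul_cancel₀ (ne_of_gt hrd), one_smul,
          add_sub_cancel_left, norm_smul, norm_inv, Real.norm_eq_abs, abs_of_pos hrd]
        calc (r ^ d)⁻¹ * ‖∫ s in cube d r, (α w s - α 0 s)‖
            ≤ (r ^ d)⁻¹ * (2 * M * r ^ d) := by
              apply mul_le_mul_of_nonneg_left herr (by positivity)
          _ = 2 * M := by field_simp
      have h3 : ‖α 0 w‖ ≤ ε * max ‖w‖ 1 + 2 * M := by
        have h4 : ‖α 0 w‖ ≤ ‖(r ^ d : ℝ)⁻¹ • (∫ s in cube d r, α s w)‖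
            + ‖(r ^ d : ℝ)⁻¹ • (∫ s in cube d r, α s w) - α 0 w‖ := by
          have h5 := norm_sub_le ((r ^ d : ℝ)⁻¹ • (∫ s in cube d r, α s w))
            ((r ^ d : ℝ)⁻¹ • (∫ s in cube d r, α s w) - α 0 w)
          simpa using h5
        exact h4.trans (by linarith [add_le_add h1 h2])
      exact le_trans (hlow 0 w) h3
    -- apply to w = n • v
    obtain ⟨n, hn⟩ := exists_nat_gt ((C + 2 * M) * (2 * lam) / ‖v‖ + 1)
    have hn1 : (1:ℝ) ≤ n := by
      have : (0:ℝ) ≤ (C + 2 * M) * (2 * lam) / ‖v‖ := by positivity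
      linarith
    have hw : A ((n : ℝ) • v) = 0 := by rw [A.map_smul, hAv, smul_zero]
    have hk := key ((n : ℝ) • v) hw
    rw [norm_smul, Real.norm_natCast] at hk
    have hmaxle : max ((n:ℝ) * ‖v‖) 1 ≤ (n:ℝ) * max ‖v‖ 1 := by
      apply max_le
      · exact mul_le_mul_of_nonneg_left (le_max_left _ _) (by linarith)
      · calc (1:ℝ) ≤ (n:ℝ) := hn1
          _ ≤ (n:ℝ) * max ‖v‖ 1 := le_mul_of_one_le_right (by linarith) hmax1
    have hεmax : ε * ((n:ℝ) * max ‖v‖ 1) = (n:ℝ) * ‖v‖ / (2 * lam) := by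
      rw [hε_def]; field_simp
    have hle : lam⁻¹ * ((n:ℝ) * ‖v‖) - C ≤ (n:ℝ) * ‖v‖ / (2 * lam) + 2 * M := by
      have := mul_le_mul_of_nonneg_left hmaxle hε.le
      rw [hεmax] at this
      linarith
    have hinv : lam⁻¹ * ((n:ℝ) * ‖v‖) = (n:ℝ) * ‖v‖ / lam := by field_simp
    rw [hinv] at hle
    -- derive contradiction
    have hfinal : (n:ℝ) * ‖v‖ / (2 * lam) ≤ C + 2 * M := by
      have : (n:ℝ) * ‖v‖ / lam - (n:ℝ) * ‖v‖ / (2 * lam) = (n:ℝ) * ‖v‖ / (2 * lam) := by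
        field_simp; ring
      linarith
    have hgt : (C + 2 * M) * (2 * lam) / ‖v‖ < (n:ℝ) := by linarith
    rw [div_lt_iff₀ hvn] at hgt
    rw [div_le_iff₀ (by positivity : (0:ℝ) < 2 * lam)] at hfinal
    nlinarith
  exact ⟨hinj, LinearMap.surjective_of_injective hinj⟩
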